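/- arXiv:1301.2097 — 3 statements merged into one kernel-verified Lean document; each statement's English description precedes it below -/
import Mathlib

section
/- The generating functions g₁ = 1, g₂ = tan(x)·sin(u) − u_x·cos(u), g₃ = tan(x)·cos(u) + u_x·sin(u) satisfy the so(3) commutation relations under the contact bracket: [g₁,g₂] = g₃, [g₁,g₃] = −g₂, [g₂,g₃] = g₁. -/
/-- Partial derivative in direction `i` of a function on `ℝ⁵ = Fin 5 → ℝ`.
Coordinates: 0 = t, 1 = x, 2 = u, 3 = p (= u_t), 4 = q (= u_x). -/
noncomputable def pd (i : Fin 5) (f : (Fin 5 → ℝ) → ℝ) (v : Fin 5 → ℝ) : ℝ :=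
  fderiv ℝ f v (Pi.single i 1)

/-- The contact bracket of two generating functions. -/
noncomputable def cbracket (f g : (Fin 5 → ℝ) → ℝ) (v : Fin 5 → ℝ) : ℝ :=
  (pd 3 g v * pd 2 f v - pd 3 f v * pd 2 g v) * v 3
  + (pd 4 g v * pd 2 f v - pd 4 f v * pd 2 g v) * v 4
  + pd 3 g v * pd 0 f v - pd 3 f v * pd 0 g v
  + pd 4 g v * pd 1 f v - pd 4 f v * pd 1 g v
  + f v * pd 2 g v - g v * pd 2 f v

noncomputable abbrev P (i : Fin 5) : (Fin 5 → ℝ) →L[ℝ] ℝ := ContinuousLinearMap.proj i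

lemma hproj (i : Fin 5) (v : Fin 5 → ℝ) :
    HasFDerivAt (fun w : Fin 5 → ℝ => w i) (P i) v := (P i).hasFDerivAt

lemma hg2 (v : Fin 5 → ℝ) (hv : Real.cos (v 1) ≠ 0) :
    HasFDerivAt (fun w : Fin 5 → ℝ => Real.tan (w 1) * Real.sin (w 2) - w 4 * Real.cos (w 2))
      ((Real.tan (v 1) • (Real.cos (v 2) • P 2) + Real.sin (v 2) • ((1 / Real.cos (v 1) ^ 2) • P 1))
        - (v 4 • ((-Real.sin (v 2)) • P 2) + Real.cos (v 2) • P 4)) v := by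
  have h := (((Real.hasDerivAt_tan hv).comp_hasFDerivAt v (hproj 1 v)).mul
      ((Real.hasDerivAt_sin _).comp_hasFDerivAt v (hproj 2 v))).sub
    ((hproj 4 v).mul ((Real.hasDerivAt_cos _).comp_hasFDerivAt v (hproj 2 v)))
  exact h

lemma hg3 (v : Fin 5 → ℝ) (hv : Real.cos (v 1) ≠ 0) :
    HasFDerivAt (fun w : Fin 5 → ℝ => Real.tan (w 1) * Real.cos (w 2) + w 4 * Real.sin (w 2))
      ((Real.tan (v 1) • ((-Real.sin (v 2)) • P 2) + Real.cos (v 2) • ((1 / Real.cos (v 1) ^ 2) • P 1))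
        + (v 4 • (Real.cos (v 2) • P 2) + Real.sin (v 2) • P 4)) v := by
  have h := (((Real.hasDerivAt_tan hv).comp_hasFDerivAt v (hproj 1 v)).mul
      ((Real.hasDerivAt_cos _).comp_hasFDerivAt v (hproj 2 v))).add
    ((hproj 4 v).mul ((Real.hasDerivAt_sin _).comp_hasFDerivAt v (hproj 2 v)))
  exact h

/-- ⟨1, tan x·sin u − u_x·cos u, tan x·cos u + u_x·sin u⟩ realizes so(3)
on the set where cos x ≠ 0. -/
theorem so3_realization (v : Fin 5 → ℝ) (hv : Real.cos (v 1) ≠ 0) :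
    cbracket (fun _ => (1 : ℝ))
        (fun w => Real.tan (w 1) * Real.sin (w 2) - w 4 * Real.cos (w 2)) v
      = Real.tan (v 1) * Real.cos (v 2) + v 4 * Real.sin (v 2) ∧
    cbracket (fun _ => (1 : ℝ))
        (fun w => Real.tan (w 1) * Real.cos (w 2) + w 4 * Real.sin (w 2)) v
      = - (Real.tan (v 1) * Real.sin (v 2) - v 4 * Real.cos (v 2)) ∧
    cbracket (fun w => Real.tan (w 1) * Real.sin (w 2) - w 4 * Real.cos (w 2))
        (fun w => Real.tan (w 1) * Real.cos (w 2) + w 4 * Real.sin (w 2)) v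
      = 1 := by
  have h2 := (hg2 v hv).fderiv
  have h3 := (hg3 v hv).fderiv
  have hc : fderiv ℝ (fun _ : Fin 5 → ℝ => (1 : ℝ)) v = 0 := fderiv_const_apply 1
  simp only [cbracket, pd, h2, h3, hc, ContinuousLinearMap.zero_apply,
    ContinuousLinearMap.add_apply, ContinuousLinearMap.sub_apply,
    ContinuousLinearMap.smul_apply, ContinuousLinearMap.proj_apply,
    Pi.single_eq_same, smul_eq_mul]
  simp (config := { decide := true }) only [Pi.single_apply, if_true, if_false]
  norm_num
  have hs := Real.sin_sq_add_cos_sq (v 2)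
  have hsec : (Real.cos (v 1) ^ 2)⁻¹ = Real.tan (v 1) ^ 2 + 1 := by
    rw [Real.tan_eq_sin_div_cos]
    field_simp
    exact (Real.sin_sq_add_cos_sq (v 1)).symm
  rw [hsec]
  ring_nf
  exact ⟨trivial, hs⟩
end

section
/- The realizations ⟨1, u, u² − u_x²⟩ of sl(2,ℝ) and ⟨u_t, −t·u_t + λ·u_x, t²·u_t + 2λ·t·u_x⟩ commute elementwise under the contact bracket: for every λ ∈ ℝ, each bracket [gᵢ, hⱼ] = 0 for gᵢ ∈ {1, u, u² − u_x²} and hⱼ ∈ {u_t, −t·u_t − λ·u_x, t²·u_t + 2λ·t·u_x}. -/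
lemma pd_coord (i j : Fin 5) (v : Fin 5 → ℝ) :
    pd i (fun w => w j) v = if j = i then 1 else 0 := by
  have : (fun w : Fin 5 → ℝ => w j) = (ContinuousLinearMap.proj j : (Fin 5 → ℝ) →L[ℝ] ℝ) := rfl
  rw [pd, this, ContinuousLinearMap.fderiv]
  simp [Pi.single_apply]

lemma pd_const (i : Fin 5) (c : ℝ) (v : Fin 5 → ℝ) : pd i (fun _ => c) v = 0 := by
  simp [pd]

lemma pd_sub (i : Fin 5) (f g : (Fin 5 → ℝ) → ℝ) (v : Fin 5 → ℝ)
    (hf : DifferentiableAt ℝ f v) (hg : DifferentiableAt ℝ g v) :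
    pd i (fun w => f w - g w) v = pd i f v - pd i g v := by
  simp [pd, fderiv_fun_sub hf hg]

lemma pd_add (i : Fin 5) (f g : (Fin 5 → ℝ) → ℝ) (v : Fin 5 → ℝ)
    (hf : DifferentiableAt ℝ f v) (hg : DifferentiableAt ℝ g v) :
    pd i (fun w => f w + g w) v = pd i f v + pd i g v := by
  simp [pd, fderiv_fun_add hf hg]

lemma pd_mul (i : Fin 5) (f g : (Fin 5 → ℝ) → ℝ) (v : Fin 5 → ℝ)
    (hf : DifferentiableAt ℝ f v) (hg : DifferentiableAt ℝ g v) :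
    pd i (fun w => f w * g w) v = pd i f v * g v + f v * pd i g v := by
  simp [pd, fderiv_fun_mul hf hg]; ring

lemma pd_g3 (i : Fin 5) (v : Fin 5 → ℝ) :
    pd i (fun w => (w 2) ^ 2 - (w 4) ^ 2) v
      = (if (2 : Fin 5) = i then 2 * v 2 else 0) - (if (4 : Fin 5) = i then 2 * v 4 else 0) := by
  have h : (fun w : Fin 5 → ℝ => (w 2) ^ 2 - (w 4) ^ 2)
      = fun w => (fun w : Fin 5 → ℝ => w 2 * w 2) w - (fun w : Fin 5 → ℝ => w 4 * w 4) w := by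
    ext w; ring
  rw [h, pd_sub i _ _ v (by fun_prop) (by fun_prop),
    pd_mul i _ _ v (by fun_prop) (by fun_prop),
    pd_mul i _ _ v (by fun_prop) (by fun_prop), pd_coord, pd_coord]
  by_cases h2 : (2 : Fin 5) = i <;> by_cases h4 : (4 : Fin 5) = i <;>
    simp only [h2, h4, eq_self_iff_true, ite_true, ite_false, if_true, if_false] <;> ring

lemma pd_h2 (lam : ℝ) (i : Fin 5) (v : Fin 5 → ℝ) :
    pd i (fun w => - w 0 * w 3 - lam * w 4) v
      = (if (0 : Fin 5) = i then -v 3 else 0) + (if (3 : Fin 5) = i then -v 0 else 0)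
        - (if (4 : Fin 5) = i then lam else 0) := by
  have h : (fun w : Fin 5 → ℝ => - w 0 * w 3 - lam * w 4)
      = fun w => (fun w : Fin 5 → ℝ => (-w 0) * w 3) w - (fun w : Fin 5 → ℝ => lam * w 4) w := rfl
  have hn : (fun w : Fin 5 → ℝ => (-w 0) * w 3)
      = fun w => (fun w : Fin 5 → ℝ => (0:ℝ) - w 0) w * (fun w : Fin 5 → ℝ => w 3) w := by
    ext w; ring
  rw [h, pd_sub i _ _ v (by fun_prop) (by fun_prop), hn,
    pd_mul i _ _ v (by fun_prop) (by fun_prop),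
    pd_mul i _ _ v (by fun_prop) (by fun_prop),
    pd_sub i _ _ v (by fun_prop) (by fun_prop), pd_const, pd_const, pd_coord, pd_coord, pd_coord]
  by_cases h0 : (0 : Fin 5) = i <;> by_cases h3 : (3 : Fin 5) = i <;>
    by_cases h4 : (4 : Fin 5) = i <;>
    simp only [h0, h3, h4, eq_self_iff_true, ite_true, ite_false, if_true, if_false] <;> ring

lemma pd_h3 (lam : ℝ) (i : Fin 5) (v : Fin 5 → ℝ) :
    pd i (fun w => (w 0) ^ 2 * w 3 + 2 * lam * w 0 * w 4) v
      = (if (0 : Fin 5) = i then 2 * v 0 * v 3 + 2 * lam * v 4 else 0)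
        + (if (3 : Fin 5) = i then (v 0) ^ 2 else 0)
        + (if (4 : Fin 5) = i then 2 * lam * v 0 else 0) := by
  have h : (fun w : Fin 5 → ℝ => (w 0) ^ 2 * w 3 + 2 * lam * w 0 * w 4)
      = fun w => (fun w : Fin 5 → ℝ => (fun w : Fin 5 → ℝ => w 0 * w 0) w *
          (fun w : Fin 5 → ℝ => w 3) w) w
        + (fun w : Fin 5 → ℝ => (fun w : Fin 5 → ℝ => (2 * lam) * w 0) w *
          (fun w : Fin 5 → ℝ => w 4) w) w := by
    ext w; ring
  rw [h, pd_add i _ _ v (by fun_prop) (by fun_prop),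
    pd_mul i _ _ v (by fun_prop) (by fun_prop),
    pd_mul i _ _ v (by fun_prop) (by fun_prop),
    pd_mul i _ _ v (by fun_prop) (by fun_prop),
    pd_mul i _ _ v (by fun_prop) (by fun_prop)]
  simp only [pd_const, pd_coord]
  by_cases h0 : (0 : Fin 5) = i <;> by_cases h3 : (3 : Fin 5) = i <;>
    by_cases h4 : (4 : Fin 5) = i <;>
    simp only [h0, h3, h4, eq_self_iff_true, ite_true, ite_false, if_true, if_false] <;> ring

/-- The realizations ⟨1, u, u² − u_x²⟩ and ⟨u_t, −t·u_t − λ·u_x, t²·u_t + 2λ·t·u_x⟩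
commute elementwise under the contact bracket. -/
theorem so22_commuting (lam : ℝ) (v : Fin 5 → ℝ) :
    let g₁ : (Fin 5 → ℝ) → ℝ := fun _ => 1
    let g₂ : (Fin 5 → ℝ) → ℝ := fun w => w 2
    let g₃ : (Fin 5 → ℝ) → ℝ := fun w => (w 2) ^ 2 - (w 4) ^ 2
    let h₁ : (Fin 5 → ℝ) → ℝ := fun w => w 3
    let h₂ : (Fin 5 → ℝ) → ℝ := fun w => - w 0 * w 3 - lam * w 4
    let h₃ : (Fin 5 → ℝ) → ℝ := fun w => (w 0) ^ 2 * w 3 + 2 * lam * w 0 * w 4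
    cbracket g₁ h₁ v = 0 ∧ cbracket g₁ h₂ v = 0 ∧ cbracket g₁ h₃ v = 0 ∧
    cbracket g₂ h₁ v = 0 ∧ cbracket g₂ h₂ v = 0 ∧ cbracket g₂ h₃ v = 0 ∧
    cbracket g₃ h₁ v = 0 ∧ cbracket g₃ h₂ v = 0 ∧ cbracket g₃ h₃ v = 0 := by
  simp only [cbracket, pd_const, pd_coord, pd_g3, pd_h2, pd_h3, Fin.reduceEq,
    eq_self_iff_true, ite_true, ite_false, if_true, if_false]
  refine ⟨?_, ?_, ?_, ?_, ?_, ?_, ?_, ?_, ?_⟩ <;> ring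
end

section
/- The five generating functions g₁ = 1, g₂ = u, g₃ = u² − u_x², g₄ = (e^{−x}·u_x)^{1/2}, g₅ = (e^{−x}·u_x)^{1/2}·(u + u_x) satisfy, on the domain u_x > 0, the semi-direct-sum commutation relations of sl(2,ℝ) ⋉ A_{2.1}: [g₁,g₂] = g₁, [g₁,g₃] = 2g₂, [g₂,g₃] = g₃, [g₁,g₅] = g₄, [g₂,g₄] = −½·g₄, [g₂,g₅] = ½·g₅, [g₃,g₄] = −g₅, [g₁,g₄] = 0, [g₃,g₅] = 0, [g₄,g₅] = 0. -/
lemma pd_eq {f : (Fin 5 → ℝ) → ℝ} {D : (Fin 5 → ℝ) →L[ℝ] ℝ} {v : Fin 5 → ℝ}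
    (h : HasFDerivAt f D v) (i : Fin 5) : pd i f v = D (Pi.single i 1) := by
  rw [pd, h.fderiv]

noncomputable def π (j : Fin 5) : (Fin 5 → ℝ) →L[ℝ] ℝ := ContinuousLinearMap.proj j

lemma hπ (j : Fin 5) (v : Fin 5 → ℝ) : HasFDerivAt (fun w : Fin 5 → ℝ => w j) (π j) v :=
  (π j).hasFDerivAt

set_option maxHeartbeats 2000000 in
/-- The five generating functions 1, u, u² − u_x², (e^{−x}u_x)^{1/2},
(e^{−x}u_x)^{1/2}(u + u_x) satisfy the commutation relations of
sl(2,ℝ) ⋉ A_{2.1} on the domain u_x > 0. -/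
theorem sl2_semidirect_realization (v : Fin 5 → ℝ) (hv : v 4 > 0) :
    let g₁ : (Fin 5 → ℝ) → ℝ := fun _ => 1
    let g₂ : (Fin 5 → ℝ) → ℝ := fun w => w 2
    let g₃ : (Fin 5 → ℝ) → ℝ := fun w => (w 2) ^ 2 - (w 4) ^ 2
    let g₄ : (Fin 5 → ℝ) → ℝ := fun w => Real.sqrt (Real.exp (- w 1) * w 4)
    let g₅ : (Fin 5 → ℝ) → ℝ :=
      fun w => Real.sqrt (Real.exp (- w 1) * w 4) * (w 2 + w 4)
    cbracket g₁ g₂ v = g₁ v ∧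
    cbracket g₁ g₃ v = 2 * g₂ v ∧
    cbracket g₂ g₃ v = g₃ v ∧
    cbracket g₁ g₅ v = g₄ v ∧
    cbracket g₂ g₄ v = - (1 / 2) * g₄ v ∧
    cbracket g₂ g₅ v = (1 / 2) * g₅ v ∧
    cbracket g₃ g₄ v = - g₅ v ∧
    cbracket g₁ g₄ v = 0 ∧
    cbracket g₃ g₅ v = 0 ∧
    cbracket g₄ g₅ v = 0 := by
  dsimp only
  have hEq : (0:ℝ) < Real.exp (- v 1) * v 4 :=
    mul_pos (Real.exp_pos _) hv
  have hne : Real.exp (- v 1) * v 4 ≠ 0 := ne_of_gt hEq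
  set E : ℝ := Real.exp (- v 1) with hE
  set S : ℝ := Real.sqrt (E * v 4) with hSdef
  have hSpos : 0 < S := Real.sqrt_pos.2 hEq
  have hS2 : S ^ 2 = E * v 4 := Real.sq_sqrt (le_of_lt hEq)
  have h1 : HasFDerivAt (fun _ : Fin 5 → ℝ => (1:ℝ)) (0 : (Fin 5 → ℝ) →L[ℝ] ℝ) v := hasFDerivAt_const (𝕜 := ℝ) 1 v
  have h2 := hπ 2 v
  have h3 : HasFDerivAt (fun w : Fin 5 → ℝ => w 2 ^ 2 - w 4 ^ 2)
      ((v 2 • π 2 + v 2 • π 2) - (v 4 • π 4 + v 4 • π 4)) v := by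
    simpa [pow_two, Pi.mul_def, Pi.sub_def] using ((hπ 2 v).mul (hπ 2 v)).sub ((hπ 4 v).mul (hπ 4 v))
  have hexp : HasFDerivAt (fun w : Fin 5 → ℝ => Real.exp (- w 1)) (Real.exp (- v 1) • (-π 1)) v :=
    by have := HasDerivAt.comp_hasFDerivAt (𝕜 := ℝ) v (Real.hasDerivAt_exp (- v 1)) (hπ 1 v).neg; exact this
  have hin := hexp.mul (hπ 4 v)
  have h4 := HasDerivAt.comp_hasFDerivAt (𝕜 := ℝ) v (Real.hasDerivAt_sqrt hne) hin
  have h5 := h4.mul ((hπ 2 v).add (hπ 4 v))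
  rw [← hE] at h4 h5
  rw [Pi.mul_apply, ← hSdef] at h4 h5
  have h4' : HasFDerivAt (fun w : Fin 5 → ℝ => Real.sqrt (Real.exp (- w 1) * w 4))
      ((1 / (2 * S)) • (E • π 4 + v 4 • E • -π 1)) v := h4
  have h5' : HasFDerivAt
      (fun w : Fin 5 → ℝ => Real.sqrt (Real.exp (- w 1) * w 4) * (w 2 + w 4))
      (S • (π 2 + π 4) + (v 2 + v 4) • (1 / (2 * S)) • (E • π 4 + v 4 • E • -π 1)) v := h5
  have hv' : v 4 ≠ 0 := ne_of_gt hv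
  have hS' : S ≠ 0 := ne_of_gt hSpos
  have hE4 : E = S ^ 2 / v 4 := by rw [hS2]; field_simp
  simp only [cbracket, pd_eq h1, pd_eq h2, pd_eq h3, pd_eq h4', pd_eq h5',
    ContinuousLinearMap.add_apply, ContinuousLinearMap.sub_apply,
    ContinuousLinearMap.smul_apply, ContinuousLinearMap.neg_apply,
    ContinuousLinearMap.zero_apply, π, ContinuousLinearMap.proj_apply,
    Pi.single_apply, smul_eq_mul,
    show ((0:Fin 5) = 0) ↔ True from by decide,
    show ((0:Fin 5) = 1) ↔ False from by decide,
    show ((0:Fin 5) = 2) ↔ False from by decide,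
    show ((0:Fin 5) = 3) ↔ False from by decide,
    show ((0:Fin 5) = 4) ↔ False from by decide,
    show ((1:Fin 5) = 0) ↔ False from by decide,
    show ((1:Fin 5) = 1) ↔ True from by decide,
    show ((1:Fin 5) = 2) ↔ False from by decide,
    show ((1:Fin 5) = 3) ↔ False from by decide,
    show ((1:Fin 5) = 4) ↔ False from by decide,
    show ((2:Fin 5) = 0) ↔ False from by decide,
    show ((2:Fin 5) = 1) ↔ False from by decide,
    show ((2:Fin 5) = 2) ↔ True from by decide,
    show ((2:Fin 5) = 3) ↔ False from by decide,
    show ((2:Fin 5) = 4) ↔ False from by decide,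
    show ((3:Fin 5) = 0) ↔ False from by decide,
    show ((3:Fin 5) = 1) ↔ False from by decide,
    show ((3:Fin 5) = 2) ↔ False from by decide,
    show ((3:Fin 5) = 3) ↔ True from by decide,
    show ((3:Fin 5) = 4) ↔ False from by decide,
    show ((4:Fin 5) = 0) ↔ False from by decide,
    show ((4:Fin 5) = 1) ↔ False from by decide,
    show ((4:Fin 5) = 2) ↔ False from by decide,
    show ((4:Fin 5) = 3) ↔ False from by decide,
    show ((4:Fin 5) = 4) ↔ True from by decide,
    if_true, if_false, mul_zero, zero_mul, mul_one, one_mul, add_zero, zero_add,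
    sub_zero, zero_sub, neg_zero, mul_neg, neg_neg]
  rw [show Real.sqrt (Real.exp (- v 1) * v 4) = S from by rw [hSdef, hE]]
  rw [hE4]
  clear_value E S
  refine ⟨?_, ?_, ?_, ?_, ?_, ?_, ?_, ?_, ?_, ?_⟩ <;>
    first
      | (field_simp [hS', hv']; ring)
      | field_simp [hS', hv']
      | ring
      | trivial
end
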